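/- arXiv:2004.10732 — 2 statements merged into one kernel-verified Lean document; each statement's English description precedes it below -/
import Mathlib

section
/- The partial score with respect to the regression parameters has vanishing conditional expectation (so the score is a martingale difference sequence): for all real numbers λ > 0, k > 0, π ∈ (0,1), every natural number n ≥ 1 and all vectors a, b ∈ ℝⁿ, setting p = k/(k+λ) and q = π + (1−π)p^k, one has f(0)·(1/q)·(a + (1−π)·k·p^{k−1}·b − p^k·a) + ∑_{m=1}^∞ f(m)·( −(1/(1−π))·a + (k/p)·b − (m/(1−p))·b ) = 0 (the zero vector of ℝⁿ). -/
/-- The negative binomial pmf with real shape `k` (and `p = k/(k+λ)`). -/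
noncomputable def nbPmf (lam k : ℝ) (m : ℕ) : ℝ :=
  Real.Gamma ((m : ℝ) + k) / ((m.factorial : ℝ) * Real.Gamma k) *
    (lam / (k + lam)) ^ m * (k / (k + lam)) ^ k

/-- The zero-inflated negative binomial (ZINB) pmf on ℕ. -/
noncomputable def zinbPmf (lam k pi : ℝ) (m : ℕ) : ℝ :=
  (if m = 0 then pi else 0) + (1 - pi) * nbPmf lam k m


open MeasureTheory Real Set in
lemma gammaSeries {s x : ℝ} (hs : 0 < s) (hx0 : 0 ≤ x) (hx1 : x < 1) :
    HasSum (fun m : ℕ => Real.Gamma ((m : ℝ) + s) / (m.factorial : ℝ) * x ^ m)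
      (Real.Gamma s / (1 - x) ^ s) := by
  set a : ℕ → ℝ := fun m => Real.Gamma ((m : ℝ) + s) / (m.factorial : ℝ) * x ^ m with ha
  set g : ℕ → ℝ → ℝ := fun m t => x ^ m / (m.factorial : ℝ) * (t ^ ((m : ℝ) + s - 1) * Real.exp (-t)) with hg
  have hxpos : 0 < 1 - x := by linarith
  have hanonneg : ∀ m, 0 ≤ a m := by
    intro m
    have := Real.Gamma_nonneg_of_nonneg (by positivity : (0:ℝ) ≤ (m : ℝ) + s)
    positivity
  -- each integral
  have hint : ∀ m : ℕ, IntegrableOn (fun t => t ^ ((m : ℝ) + s - 1) * Real.exp (-(1 * t))) (Ioi 0) := by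
    intro m
    refine (Real.GammaIntegral_convergent (by positivity : (0:ℝ) < (m:ℝ) + s)).congr_fun
      (fun t ht => ?_) measurableSet_Ioi
    rw [one_mul, mul_comm]
  have key1 : ∀ m : ℕ, (∫⁻ t in Ioi 0, ENNReal.ofReal (g m t)) = ENNReal.ofReal (a m) := by
    intro m
    rw [← MeasureTheory.ofReal_integral_eq_lintegral_ofReal]
    · congr 1
      rw [hg]
      simp only
      rw [MeasureTheory.integral_const_mul]
      have := Real.integral_rpow_mul_exp_neg_mul_Ioi (by positivity : (0:ℝ) < (m:ℝ) + s) one_pos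
      simp only [one_mul, ne_eq, one_div, inv_one, Real.one_rpow] at this
      have h2 : (∫ t : ℝ in Ioi 0, t ^ ((m : ℝ) + s - 1) * Real.exp (-t)) = Real.Gamma ((m:ℝ) + s) := by
        rw [← this]
      rw [h2, ha]; ring
    · exact (Integrable.const_mul (by simpa [one_mul, IntegrableOn] using hint m) _)
    · filter_upwards [self_mem_ae_restrict measurableSet_Ioi] with t ht
      have : (0:ℝ) < t := ht
      positivity
  -- pointwise sum
  have key2 : ∀ t : ℝ, t ∈ Ioi (0:ℝ) →
      HasSum (fun m => g m t) (t ^ (s - 1) * Real.exp (-((1 - x) * t))) := by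
    intro t ht
    have ht' : (0:ℝ) < t := ht
    have h1 : HasSum (fun m : ℕ => (x * t) ^ m / (m.factorial : ℝ)) (Real.exp (x * t)) := by
      rw [Real.exp_eq_exp_ℝ]
      exact NormedSpace.expSeries_div_hasSum_exp (x * t)
    have h2 := h1.mul_right (t ^ (s - 1) * Real.exp (-t))
    convert h2 using 1
    · rfl
    · funext m
      rw [hg]
      simp only
      rw [show (m : ℝ) + s - 1 = (m : ℝ) + (s - 1) by ring, Real.rpow_add ht',
        Real.rpow_natCast, mul_pow]
      ring
    · rw [show -((1 - x) * t) = x * t + -t by ring, Real.exp_add]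
      ring
  -- Tonelli
  have hmeas : ∀ m : ℕ, Measurable (fun t => ENNReal.ofReal (g m t)) := by
    intro m
    apply ENNReal.measurable_ofReal.comp
    fun_prop
  have tonelli : ∑' m, ENNReal.ofReal (a m)
      = ENNReal.ofReal ((1 / (1 - x)) ^ s * Real.Gamma s) := by
    calc ∑' m, ENNReal.ofReal (a m)
        = ∑' m, ∫⁻ t in Ioi 0, ENNReal.ofReal (g m t) := by
          exact (tsum_congr fun m => (key1 m).symm)
      _ = ∫⁻ t in Ioi 0, ∑' m, ENNReal.ofReal (g m t) :=
          (MeasureTheory.lintegral_tsum fun m => (hmeas m).aemeasurable).symm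
      _ = ∫⁻ t in Ioi 0, ENNReal.ofReal (t ^ (s - 1) * Real.exp (-((1 - x) * t))) := by
          refine setLIntegral_congr_fun measurableSet_Ioi ?_
          intro t ht
          have ht' : (0:ℝ) < t := ht
          have hnn : ∀ m, 0 ≤ g m t := by
            intro m; rw [hg]; simp only; positivity
          beta_reduce
          rw [← ENNReal.ofReal_tsum_of_nonneg hnn ((key2 t ht).summable),
            (key2 t ht).tsum_eq]
      _ = ENNReal.ofReal ((1 / (1 - x)) ^ s * Real.Gamma s) := by
          rw [← MeasureTheory.ofReal_integral_eq_lintegral_ofReal]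
          · rw [Real.integral_rpow_mul_exp_neg_mul_Ioi hs hxpos]
          · have := integrableOn_rpow_mul_exp_neg_mul_rpow
              (by linarith : (-1:ℝ) < s - 1) one_pos hxpos
            refine this.congr_fun (fun t ht => ?_) measurableSet_Ioi
            beta_reduce; rw [Real.rpow_one]; ring_nf
          · filter_upwards [self_mem_ae_restrict measurableSet_Ioi] with t ht
            have : (0:ℝ) < t := ht
            positivity
  have hsummable : Summable a := by
    have hne : ∑' m, ENNReal.ofReal (a m) ≠ ⊤ := by rw [tonelli]; exact ENNReal.ofReal_ne_top
    have := ENNReal.summable_toReal hne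
    refine this.congr fun m => ?_
    rw [ENNReal.toReal_ofReal (hanonneg m)]
  have hval : ∑' m, a m = (1 / (1 - x)) ^ s * Real.Gamma s := by
    have h1 : ENNReal.ofReal (∑' m, a m) = ENNReal.ofReal ((1 / (1 - x)) ^ s * Real.Gamma s) := by
      rw [ENNReal.ofReal_tsum_of_nonneg hanonneg hsummable, tonelli]
    have hG := Real.Gamma_pos_of_pos hs
    rw [ENNReal.ofReal_eq_ofReal_iff (tsum_nonneg hanonneg) (by positivity)] at h1
    exact h1
  have := hsummable.hasSum
  rw [hval] at this
  convert this using 1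
  rw [one_div, Real.inv_rpow (le_of_lt hxpos), div_eq_mul_inv, mul_comm]

section NB
variable {lam k : ℝ} (hlam : 0 < lam) (hk : 0 < k)
include hlam hk

lemma aux_facts : 0 < k + lam ∧ 0 ≤ lam / (k + lam) ∧ lam / (k + lam) < 1 ∧
    1 - lam / (k + lam) = k / (k + lam) ∧ 0 < k / (k + lam) := by
  have h1 : 0 < k + lam := by linarith
  refine ⟨h1, by positivity, ?_, ?_, by positivity⟩
  · rw [div_lt_one h1]; linarith
  · field_simp; ring

lemma hasSum_nbPmf : HasSum (nbPmf lam k) 1 := by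
  obtain ⟨h1, hx0, hx1, h1x, hp0⟩ := aux_facts hlam hk
  set x := lam / (k + lam)
  set p := k / (k + lam)
  have hG : Real.Gamma k ≠ 0 := (Real.Gamma_pos_of_pos hk).ne'
  have hpk : (0:ℝ) < p ^ k := Real.rpow_pos_of_pos hp0 k
  have h := (gammaSeries hk hx0 hx1).mul_right (p ^ k / Real.Gamma k)
  rw [h1x] at h
  convert h using 1
  · rfl
  · funext m
    show Real.Gamma ((m : ℝ) + k) / ((m.factorial : ℝ) * Real.Gamma k) * x ^ m * p ^ k = _
    field_simp
  · field_simp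

lemma hasSum_succ_mul_nbPmf :
    HasSum (fun m : ℕ => ((m : ℝ) + 1) * nbPmf lam k (m + 1)) lam := by
  obtain ⟨h1, hx0, hx1, h1x, hp0⟩ := aux_facts hlam hk
  set x := lam / (k + lam) with hxdef
  set p := k / (k + lam) with hpdef
  have hG : Real.Gamma k ≠ 0 := (Real.Gamma_pos_of_pos hk).ne'
  have hpk : (0:ℝ) < p ^ k := Real.rpow_pos_of_pos hp0 k
  have h := (gammaSeries (by linarith : (0:ℝ) < k + 1) hx0 hx1).mul_right (x * p ^ k / Real.Gamma k)
  rw [h1x] at h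
  convert h using 1
  · rfl
  · funext m
    show ((m : ℝ) + 1) * (Real.Gamma (((m + 1 : ℕ) : ℝ) + k) /
        (((m + 1).factorial : ℝ) * Real.Gamma k) * x ^ (m + 1) * p ^ k) = _
    have hm : ((m : ℝ) + 1) ≠ 0 := by positivity
    rw [Nat.factorial_succ, show (((m + 1 : ℕ)) : ℝ) + k = (m : ℝ) + (k + 1) by push_cast; ring]
    push_cast
    rw [pow_succ]
    field_simp
  · rw [Real.Gamma_add_one hk.ne', Real.rpow_add hp0, Real.rpow_one]
    have hkl : k + lam ≠ 0 := h1.ne'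
    rw [hxdef, hpdef]
    field_simp
end NB


/-- The partial score with respect to the regression parameters has vanishing
conditional expectation under the ZINB distribution: here `a` and `b` play the
roles of the gradients `∂π/∂ν` and `∂p/∂ν`, and the sum over `m ≥ 1` is
written as a sum over `m : ℕ` evaluated at `m + 1`. -/
theorem zinb_score_regression_mean_zero
    (lam k pi : ℝ) (hlam : 0 < lam) (hk : 0 < k) (hpi : pi ∈ Set.Ioo (0 : ℝ) 1)
    (n : ℕ) (hn : 1 ≤ n) (a b : Fin n → ℝ)
    (p q : ℝ) (hp : p = k / (k + lam)) (hq : q = pi + (1 - pi) * p ^ k) :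
    (zinbPmf lam k pi 0 * (1 / q)) •
        (a + ((1 - pi) * k * p ^ (k - 1)) • b - (p ^ k) • a) +
      (∑' m : ℕ, zinbPmf lam k pi (m + 1) •
        ((-(1 / (1 - pi))) • a + (k / p) • b -
          (((m : ℕ) + 1 : ℝ) / (1 - p)) • b))
      = (0 : Fin n → ℝ) := by
  obtain ⟨hpi0, hpi1⟩ := hpi
  obtain ⟨h1, hx0, hx1, h1x, hp0'⟩ := aux_facts hlam hk
  have hp0 : 0 < p := hp ▸ hp0'
  have hp1 : p < 1 := by rw [hp, div_lt_one h1]; linarith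
  have hpk : (0:ℝ) < p ^ k := Real.rpow_pos_of_pos hp0 k
  have hpk1 : p ^ k < 1 := Real.rpow_lt_one hp0.le hp1 hk
  have hq0 : 0 < q := by rw [hq]; nlinarith
  have hnb0 : nbPmf lam k 0 = p ^ k := by
    simp [nbPmf, Nat.factorial, hp]
    rw [div_self (Real.Gamma_pos_of_pos hk).ne', one_mul]
  have hz0 : zinbPmf lam k pi 0 = q := by
    simp [zinbPmf, hnb0, hq]
  have hzsucc : ∀ m : ℕ, zinbPmf lam k pi (m + 1) = (1 - pi) * nbPmf lam k (m + 1) := by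
    intro m; simp [zinbPmf]
  -- the two scalar sums
  have h' : HasSum (fun m : ℕ => nbPmf lam k (m + 1)) (1 - p ^ k) := by
    refine (hasSum_nat_add_iff 1).mpr ?_
    convert hasSum_nbPmf hlam hk using 1
    · rfl
    simp [hnb0]
  have hS0 : HasSum (fun m : ℕ => zinbPmf lam k pi (m + 1)) ((1 - pi) * (1 - p ^ k)) := by
    simpa only [hzsucc] using h'.mul_left (1 - pi)
  have hS1 : HasSum (fun m : ℕ => ((m : ℝ) + 1) * zinbPmf lam k pi (m + 1))
      ((1 - pi) * lam) := by
    have h2 := (hasSum_succ_mul_nbPmf hlam hk).mul_left (1 - pi)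
    convert h2 using 1
    · rfl
    funext m
    rw [hzsucc]; ring
  -- vector sum
  set A : Fin n → ℝ := (-(1 / (1 - pi))) • a + (k / p) • b with hA
  set C : Fin n → ℝ := (-(1 / (1 - p))) • b with hC
  have hsum : HasSum (fun m : ℕ => zinbPmf lam k pi (m + 1) •
      ((-(1 / (1 - pi))) • a + (k / p) • b - (((m : ℕ) + 1 : ℝ) / (1 - p)) • b))
      (((1 - pi) * (1 - p ^ k)) • A + ((1 - pi) * lam) • C) := by
    have h2 := (hS0.smul_const A).add (hS1.smul_const C)
    convert h2 using 1
    funext m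
    rw [hA, hC]
    funext i
    simp only [Pi.add_apply, Pi.sub_apply, Pi.smul_apply, smul_eq_mul]
    ring
  rw [hsum.tsum_eq, hz0, mul_one_div, div_self hq0.ne']
  have h1p : 1 - p = lam / (k + lam) := by rw [hp]; field_simp; ring
  have hpk' : p ^ (k - 1) = p ^ k / p := by
    rw [Real.rpow_sub hp0, Real.rpow_one]
  funext i
  simp only [Pi.add_apply, Pi.sub_apply, Pi.smul_apply, Pi.zero_apply, smul_eq_mul, hA, hC,
    one_mul]
  rw [hpk', h1p]
  have hkl : k + lam ≠ 0 := h1.ne'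
  have hpne : p ≠ 0 := hp0.ne'
  have hpine : 1 - pi ≠ 0 := by linarith
  field_simp
  rw [hp]
  field_simp
  ring
end

section
/- The conditional expectation of the partial score with respect to the overdispersion parameter k, excluding the digamma terms, reduces to (1−π)·log p̃: for all real numbers λ > 0, k > 0, π ∈ (0,1) and all real numbers c, d, setting p = k/(k+λ) and q = π + (1−π)p^k, one has f(0)·(1/q)·( c + (1−π)·p^k·((k/p)·d + log p) − p^k·c ) + ∑_{m=1}^∞ f(m)·( −c/(1−π) + (k/p)·d + log p − (m/(1−p))·d ) = (1−π)·log p. -/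
open MeasureTheory Filter Set

lemma nb_gamma_hasSum {k x : ℝ} (hk : 0 < k) (hx0 : 0 ≤ x) (hx1 : x < 1) :
    HasSum (fun m : ℕ => Real.Gamma ((m : ℝ) + k) * x ^ m / (m.factorial : ℝ))
      ((1 / (1 - x)) ^ k * Real.Gamma k) := by
  set S : ℕ → ℝ := fun m => Real.Gamma ((m : ℝ) + k) * x ^ m / (m.factorial : ℝ) with hSdef
  have hpos : ∀ m, 0 ≤ S m := by
    intro m
    have h1 : 0 < Real.Gamma ((m : ℝ) + k) := Real.Gamma_pos_of_pos (by positivity)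
    have h2 : (0:ℝ) < (m.factorial : ℝ) := by positivity
    positivity
  have hrec : ∀ m : ℕ, S (m + 1) = (((m : ℝ) + k) / ((m : ℝ) + 1) * x) * S m := by
    intro m
    have h1 : Real.Gamma (((m:ℕ) + 1 : ℕ) + k) = ((m : ℝ) + k) * Real.Gamma ((m : ℝ) + k) := by
      push_cast
      rw [show (m : ℝ) + 1 + k = ((m : ℝ) + k) + 1 by ring,
        Real.Gamma_add_one (by positivity)]
    simp only [hSdef, h1, Nat.factorial_succ]
    push_cast
    have hm1 : ((m : ℝ) + 1) ≠ 0 := by positivity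
    have hf : ((m.factorial : ℝ)) ≠ 0 := by positivity
    field_simp
    try ring
  have hsum : Summable S := by
    set r : ℝ := (1 + x) / 2 with hrdef
    have hr1 : r < 1 := by rw [hrdef]; linarith
    apply summable_of_ratio_norm_eventually_le hr1
    have h2 : Tendsto (fun m : ℕ => ((m : ℝ) + k) / ((m : ℝ) + 1)) atTop (nhds 1) := by
      have heq : (fun m : ℕ => ((m : ℝ) + k) / ((m : ℝ) + 1))
          = fun m : ℕ => 1 + (k - 1) / ((m : ℝ) + 1) := by
        funext m
        have hm1 : ((m : ℝ) + 1) ≠ 0 := by positivity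
        field_simp
        ring
      rw [heq]
      have h3 : Tendsto (fun m : ℕ => (k - 1) / ((m : ℝ) + 1)) atTop (nhds 0) :=
        tendsto_const_nhds.div_atTop
          (tendsto_atTop_add_const_right _ 1 tendsto_natCast_atTop_atTop)
      simpa using tendsto_const_nhds.add h3
    have h4 : Tendsto (fun m : ℕ => ((m : ℝ) + k) / ((m : ℝ) + 1) * x) atTop (nhds x) := by
      simpa using h2.mul_const x
    have hxr : x < r := by rw [hrdef]; linarith
    have h5 : ∀ᶠ m : ℕ in atTop, ((m : ℝ) + k) / ((m : ℝ) + 1) * x < r :=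
      h4.eventually_lt_const hxr
    filter_upwards [h5] with m hm
    have hratio : 0 ≤ ((m : ℝ) + k) / ((m : ℝ) + 1) * x := by positivity
    rw [hrec m, Real.norm_eq_abs, Real.norm_eq_abs, abs_of_nonneg (hpos m),
      abs_of_nonneg (by exact mul_nonneg hratio (hpos m))]
    exact mul_le_mul_of_nonneg_right hm.le (hpos m)
  -- integral representation
  set F : ℕ → ℝ → ℝ := fun m t => x ^ m / (m.factorial : ℝ) *
      (Real.exp (-t) * t ^ ((m : ℝ) + k - 1)) with hFdef
  have hFint : ∀ m, Integrable (F m) (volume.restrict (Set.Ioi 0)) := by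
    intro m
    exact (Real.GammaIntegral_convergent (by positivity : (0:ℝ) < (m : ℝ) + k)).const_mul _
  have hFval : ∀ m, (∫ t in Set.Ioi (0:ℝ), F m t) = S m := by
    intro m
    rw [hFdef]
    simp only
    rw [MeasureTheory.integral_const_mul, ← Real.Gamma_eq_integral (by positivity : (0:ℝ) < (m : ℝ) + k)]
    simp only [hSdef]
    ring
  have hFnorm : ∀ m, (∫ t in Set.Ioi (0:ℝ), ‖F m t‖) = S m := by
    intro m
    rw [← hFval m]
    apply setIntegral_congr_fun measurableSet_Ioi
    intro t ht
    show ‖F m t‖ = F m t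
    rw [Real.norm_eq_abs, abs_of_nonneg]
    have h1 : (0:ℝ) ≤ t ^ ((m : ℝ) + k - 1) := Real.rpow_nonneg (le_of_lt ht) _
    have h2 : (0:ℝ) ≤ x ^ m / (m.factorial : ℝ) := by positivity
    positivity
  have hswap := MeasureTheory.integral_tsum_of_summable_integral_norm hFint
    (hsum.congr fun m => (hFnorm m).symm)
  have hinner : ∀ t ∈ Set.Ioi (0:ℝ),
      (∑' m : ℕ, F m t) = t ^ (k - 1) * Real.exp (-((1 - x) * t)) := by
    intro t ht
    have ht' : (0:ℝ) < t := ht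
    have hrw : ∀ m : ℕ, F m t
        = ((x * t) ^ m / (m.factorial : ℝ)) * (Real.exp (-t) * t ^ (k - 1)) := by
      intro m
      have h1 : t ^ ((m : ℝ) + k - 1) = t ^ (m : ℕ) * t ^ (k - 1) := by
        rw [← Real.rpow_natCast t m, ← Real.rpow_add ht']
        ring_nf
      simp only [hFdef, h1, mul_pow]
      ring
    rw [tsum_congr hrw, tsum_mul_right]
    have hexp : (∑' m : ℕ, (x * t) ^ m / (m.factorial : ℝ)) = Real.exp (x * t) := by
      rw [Real.exp_eq_exp_ℝ, NormedSpace.exp_eq_tsum_div]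
    rw [hexp, show Real.exp (x * t) * (Real.exp (-t) * t ^ (k - 1))
        = t ^ (k - 1) * (Real.exp (x * t) * Real.exp (-t)) by ring, ← Real.exp_add]
    congr 1
    ring
  have hIoi : (∫ t in Set.Ioi (0:ℝ), ∑' m : ℕ, F m t) = (1 / (1 - x)) ^ k * Real.Gamma k := by
    rw [setIntegral_congr_fun measurableSet_Ioi hinner]
    exact Real.integral_rpow_mul_exp_neg_mul_Ioi hk (by linarith)
  have htsum : (∑' m, S m) = (1 / (1 - x)) ^ k * Real.Gamma k := by
    rw [← hIoi, ← hswap]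
    exact tsum_congr fun m => (hFval m).symm
  exact htsum ▸ hsum.hasSum

/-- The conditional expectation of the partial score with respect to the
overdispersion parameter `k`, excluding the digamma terms, reduces to
`(1−π)·log p`: here `c` and `d` play the roles of the derivatives `∂π/∂k`
and `∂p/∂k`, and the sum over `m ≥ 1` is written as a sum over `m : ℕ`
evaluated at `m + 1`. -/
theorem zinb_score_overdispersion_mean
    (lam k pi : ℝ) (hlam : 0 < lam) (hk : 0 < k) (hpi : pi ∈ Set.Ioo (0 : ℝ) 1)
    (c d : ℝ)
    (p q : ℝ) (hp : p = k / (k + lam)) (hq : q = pi + (1 - pi) * p ^ k) :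
    zinbPmf lam k pi 0 * (1 / q) *
        (c + (1 - pi) * p ^ k * ((k / p) * d + Real.log p) - p ^ k * c) +
      (∑' m : ℕ, zinbPmf lam k pi (m + 1) *
        (-c / (1 - pi) + (k / p) * d + Real.log p -
          (((m : ℕ) + 1 : ℝ) / (1 - p)) * d))
      = (1 - pi) * Real.log p := by
  obtain ⟨hpi0, hpi1⟩ := hpi
  have hklam : 0 < k + lam := by linarith
  set A : ℝ := -c / (1 - pi) + (k / p) * d + Real.log p with hA
  set x : ℝ := lam / (k + lam) with hx
  have hx0 : 0 ≤ x := by positivity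
  have hxpos : 0 < x := by rw [hx]; positivity
  have hxp : 1 - x = p := by rw [hp, hx]; field_simp; ring
  have hx1 : x < 1 := by rw [hx, div_lt_one hklam]; linarith
  have hp0 : 0 < p := by rw [hp]; positivity
  have hp1 : p < 1 := by linarith
  have hΓ : (0:ℝ) < Real.Gamma k := Real.Gamma_pos_of_pos hk
  have hpk : (0:ℝ) < p ^ k := Real.rpow_pos_of_pos hp0 k
  have hinv : (1 / p) ^ k * p ^ k = 1 := by
    rw [← Real.mul_rpow (by positivity) hp0.le, one_div_mul_cancel hp0.ne', Real.one_rpow]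
  -- total mass of the negative binomial pmf
  have haux := nb_gamma_hasSum hk hx0 hx1
  rw [hxp] at haux
  have hfun : ∀ m : ℕ, Real.Gamma ((m : ℝ) + k) * x ^ m / (m.factorial : ℝ) *
      (p ^ k / Real.Gamma k) = nbPmf lam k m := by
    intro m
    rw [nbPmf, ← hx, ← hp]
    have hf : ((m.factorial : ℝ)) ≠ 0 := by positivity
    field_simp
    try ring
  have h1 : HasSum (fun m : ℕ => nbPmf lam k m) 1 := by
    have h := haux.mul_right (p ^ k / Real.Gamma k)
    have hval : (1 / p) ^ k * Real.Gamma k * (p ^ k / Real.Gamma k) = 1 := by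
      rw [show (1 / p) ^ k * Real.Gamma k * (p ^ k / Real.Gamma k)
          = ((1 / p) ^ k * p ^ k) * (Real.Gamma k / Real.Gamma k) by ring,
        hinv, div_self hΓ.ne', mul_one]
    rw [hval] at h
    exact (funext hfun) ▸ h
  have hnb0 : nbPmf lam k 0 = p ^ k := by
    simp only [nbPmf, Nat.cast_zero, zero_add, Nat.factorial_zero, Nat.cast_one, one_mul,
      pow_zero, mul_one, ← hp]
    rw [div_self hΓ.ne', one_mul]
  have T1 : HasSum (fun n : ℕ => nbPmf lam k (n + 1)) (1 - p ^ k) := by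
    have h := (hasSum_nat_add_iff' (f := fun m : ℕ => nbPmf lam k m) 1).mpr h1
    simpa [Finset.sum_range_one, hnb0] using h
  -- mean of the negative binomial pmf
  have haux2 := nb_gamma_hasSum (k := k + 1) (by linarith) hx0 hx1
  rw [hxp] at haux2
  have hfun2 : ∀ n : ℕ, Real.Gamma ((n : ℝ) + (k + 1)) * x ^ n / (n.factorial : ℝ) *
      (x * p ^ k / Real.Gamma k) = ((n : ℝ) + 1) * nbPmf lam k (n + 1) := by
    intro n
    rw [nbPmf, ← hx, ← hp]
    have hf : ((n.factorial : ℝ)) ≠ 0 := by positivity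
    have hcast : ((n + 1 : ℕ) : ℝ) + k = (n : ℝ) + (k + 1) := by push_cast; ring
    rw [hcast, Nat.factorial_succ]
    push_cast
    field_simp
    ring
  have T2 : HasSum (fun n : ℕ => ((n : ℝ) + 1) * nbPmf lam k (n + 1)) (k * x / p) := by
    have h := haux2.mul_right (x * p ^ k / Real.Gamma k)
    have hval2 : (1 / p) ^ (k + 1) * Real.Gamma (k + 1) * (x * p ^ k / Real.Gamma k)
        = k * x / p := by
      rw [Real.Gamma_add_one hk.ne', Real.rpow_add (by positivity : (0:ℝ) < 1 / p),
        Real.rpow_one]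
      rw [show (1 / p) ^ k * (1 / p) * (k * Real.Gamma k) * (x * p ^ k / Real.Gamma k)
          = ((1 / p) ^ k * p ^ k) * (Real.Gamma k / Real.Gamma k) * (k * x * (1 / p)) by ring,
        hinv, div_self hΓ.ne', one_mul, one_mul]
      ring
    rw [hval2] at h
    exact (funext hfun2) ▸ h
  -- assemble the tail sum
  have hz : ∀ m : ℕ, zinbPmf lam k pi (m + 1) = (1 - pi) * nbPmf lam k (m + 1) := by
    intro m; simp [zinbPmf]
  have hT := (T1.mul_left ((1 - pi) * A)).sub (T2.mul_left ((1 - pi) * (d / (1 - p))))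
  have hfun3 : ∀ m : ℕ, (1 - pi) * A * nbPmf lam k (m + 1) -
      (1 - pi) * (d / (1 - p)) * (((m : ℝ) + 1) * nbPmf lam k (m + 1))
      = zinbPmf lam k pi (m + 1) * (A - (((m : ℝ) + 1) / (1 - p)) * d) := by
    intro m
    rw [hz m]
    ring
  have htsum : (∑' m : ℕ, zinbPmf lam k pi (m + 1) * (A - (((m : ℝ) + 1) / (1 - p)) * d))
      = (1 - pi) * A * (1 - p ^ k) - (1 - pi) * (d / (1 - p)) * (k * x / p) := by
    rw [← tsum_congr hfun3]
    exact hT.tsum_eq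
  have hz0 : zinbPmf lam k pi 0 = q := by
    simp [zinbPmf, hnb0, hq]
  have hq0 : q ≠ 0 := by
    have : 0 < q := by rw [hq]; have h2 : 0 < (1 - pi) * p ^ k := mul_pos (by linarith) hpk; linarith
    exact this.ne'
  rw [hz0, htsum, hA]
  have hxval : x = 1 - p := by linarith
  rw [hxval]
  have h1p : (1 : ℝ) - p ≠ 0 := by linarith
  have h1pi : (1 : ℝ) - pi ≠ 0 := by linarith
  field_simp
  ring
end
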